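/- Clopper–Pearson upper bound coverage: Let X ~ B(M, p) with M ≥ 1 and p ∈ [0,1], and β ∈ (0,1). Define U(M) = 1, and for k < M define U(k) as the unique q ∈ (0,1] with Σ_{ℓ=0}^{k} C(M,ℓ) qˡ (1−q)^{M−ℓ} = β/2 if such q exists in (0,1], else U(k) = 1. Then ℙ(p ≤ U(X)) ≥ 1 − β/2. -/

import Mathlib

open Finset

private lemma cp_nat1 (M ℓ : ℕ) (h1 : 1 ≤ ℓ) (h2 : ℓ ≤ M) :
    ℓ * M.choose ℓ = M * (M-1).choose (ℓ-1) := by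
  obtain ⟨l, rfl⟩ : ∃ l, ℓ = l + 1 := ⟨ℓ-1, by omega⟩
  obtain ⟨m, rfl⟩ : ∃ m, M = m + 1 := ⟨M-1, by omega⟩
  simp only [Nat.add_sub_cancel]
  have := Nat.add_one_mul_choose_eq m l
  rw [mul_comm]; exact this.symm

private lemma cp_nat2 (M ℓ : ℕ) (hM : 1 ≤ M) :
    (M - ℓ) * M.choose ℓ = M * (M-1).choose ℓ := by
  have := Nat.choose_mul_succ_eq (M-1) ℓ
  rw [Nat.sub_add_cancel hM] at this
  rw [mul_comm, ← this, mul_comm]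

private lemma cp_deriv (M k : ℕ) (hM : 1 ≤ M) (hk : k < M) (q : ℝ) :
    HasDerivAt (fun x : ℝ => ∑ ℓ ∈ Finset.range (k + 1),
        (M.choose ℓ : ℝ) * x ^ ℓ * (1 - x) ^ (M - ℓ))
      (-(((M * (M-1).choose k : ℕ) : ℝ) * q ^ k * (1 - q) ^ (M - (k+1)))) q := by
  set h : ℕ → ℝ := fun ℓ =>
    if ℓ = 0 then 0 else ((M * (M-1).choose (ℓ-1) : ℕ) : ℝ) * q ^ (ℓ-1) * (1-q) ^ (M-ℓ) with hh
  have hterm : ∀ ℓ ∈ Finset.range (k+1),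
      HasDerivAt (fun x : ℝ => (M.choose ℓ : ℝ) * x ^ ℓ * (1 - x) ^ (M - ℓ))
        (h ℓ - h (ℓ+1)) q := by
    intro ℓ hℓ
    have hℓM : ℓ < M := lt_of_lt_of_le (Finset.mem_range.mp hℓ) hk
    have h1 : HasDerivAt (fun x : ℝ => (M.choose ℓ : ℝ) * x ^ ℓ)
        ((M.choose ℓ : ℝ) * (ℓ * q ^ (ℓ-1))) q := (hasDerivAt_pow ℓ q).const_mul _
    have h2 : HasDerivAt (fun x : ℝ => (1 - x) ^ (M - ℓ))
        (((M - ℓ : ℕ) : ℝ) * (1-q) ^ (M - ℓ - 1) * (-1)) q := by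
      have hsub : HasDerivAt (fun x : ℝ => 1 - x) (-1) q := by
        simpa using (hasDerivAt_const q (1:ℝ)).fun_sub (hasDerivAt_id q)
      exact (hasDerivAt_pow (M - ℓ) (1-q)).comp q hsub
    have := h1.fun_mul h2
    refine this.congr_deriv (Eq.symm ?_)
    rcases Nat.eq_zero_or_pos ℓ with rfl | hpos
    · simp only [hh, if_pos rfl, if_neg one_ne_zero]
      norm_num
    · have e1 : (ℓ : ℝ) * (M.choose ℓ : ℝ) = ((M * (M-1).choose (ℓ-1) : ℕ) : ℝ) := by
        rw [← Nat.cast_mul, cp_nat1 M ℓ hpos hℓM.le]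
      have e2 : ((M - ℓ : ℕ) : ℝ) * (M.choose ℓ : ℝ) = ((M * (M-1).choose ℓ : ℕ) : ℝ) := by
        rw [← Nat.cast_mul, cp_nat2 M ℓ hM]
      simp only [hh, if_neg (by omega : ¬ ℓ = 0), if_neg (by omega : ¬ ℓ+1 = 0)]
      simp only [Nat.add_sub_cancel]
      rw [← Nat.sub_sub, ← e1, ← e2]
      ring
  have := HasDerivAt.fun_sum hterm
  rw [Finset.sum_range_sub' h (k+1)] at this
  simpa [hh] using this

private lemma cp_antitone (M k : ℕ) (hM : 1 ≤ M) (hk : k < M) :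
    AntitoneOn (fun x : ℝ => ∑ ℓ ∈ Finset.range (k + 1),
        (M.choose ℓ : ℝ) * x ^ ℓ * (1 - x) ^ (M - ℓ)) (Set.Icc 0 1) := by
  apply antitoneOn_of_hasDerivWithinAt_nonpos (convex_Icc 0 1)
    (f' := fun q => -(((M * (M-1).choose k : ℕ) : ℝ) * q ^ k * (1 - q) ^ (M - (k+1))))
  · apply Continuous.continuousOn
    fun_prop
  · intro x hx
    exact (cp_deriv M k hM hk x).hasDerivWithinAt
  · intro x hx
    rw [interior_Icc] at hx
    have h1 : (0:ℝ) ≤ x := hx.1.le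
    have h2 : (0:ℝ) ≤ 1 - x := by linarith [hx.2]
    have : (0:ℝ) ≤ ((M * (M-1).choose k : ℕ) : ℝ) * x ^ k * (1 - x) ^ (M - (k+1)) :=
      mul_nonneg (mul_nonneg (Nat.cast_nonneg _) (pow_nonneg h1 _)) (pow_nonneg h2 _)
    linarith

/-- Clopper–Pearson upper bound coverage: for `X ~ B(M,p)` and the (random) upper
confidence bound `U(X)` (defined from the binomial lower tail equalling `β/2`, with
`U(M) = 1`), one has `ℙ(p ≤ U(X)) ≥ 1 − β/2` for every true `p ∈ [0,1]`.  The
probability over the draw of `X` is written as the explicit binomial sum. -/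
theorem clopper_pearson_upper_coverage
    (M : ℕ) (hM : 1 ≤ M) (p β : ℝ) (hp : p ∈ Set.Icc (0 : ℝ) 1)
    (hβ : β ∈ Set.Ioo (0 : ℝ) 1)
    (U : ℕ → ℝ)
    (hUM : U M = 1)
    (hU : ∀ k, k < M →
      ((∃ q ∈ Set.Ioc (0 : ℝ) 1,
          ∑ ℓ ∈ Finset.range (k + 1), (M.choose ℓ : ℝ) * q ^ ℓ * (1 - q) ^ (M - ℓ) = β / 2) →
        (U k ∈ Set.Ioc (0 : ℝ) 1 ∧
          ∑ ℓ ∈ Finset.range (k + 1), (M.choose ℓ : ℝ) * (U k) ^ ℓ * (1 - U k) ^ (M - ℓ) = β / 2)) ∧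
      ((¬ ∃ q ∈ Set.Ioc (0 : ℝ) 1,
          ∑ ℓ ∈ Finset.range (k + 1), (M.choose ℓ : ℝ) * q ^ ℓ * (1 - q) ^ (M - ℓ) = β / 2) →
        U k = 1)) :
    1 - β / 2 ≤
      ∑ k ∈ Finset.range (M + 1),
        (if p ≤ U k then (M.choose k : ℝ) * p ^ k * (1 - p) ^ (M - k) else 0) := by
  classical
  obtain ⟨hp0, hp1⟩ := hp
  set f : ℕ → ℝ := fun k => (M.choose k : ℝ) * p ^ k * (1 - p) ^ (M - k) with hf
  have hfnn : ∀ k, 0 ≤ f k := fun k =>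
    mul_nonneg (mul_nonneg (Nat.cast_nonneg _) (pow_nonneg hp0 _))
      (pow_nonneg (by linarith) _)
  have hsum1 : ∑ k ∈ Finset.range (M+1), f k = 1 := by
    have h := add_pow p (1-p) M
    have h2 : p + (1-p) = 1 := by ring
    rw [h2, one_pow] at h
    rw [hf]
    conv_rhs => rw [h]
    exact Finset.sum_congr rfl fun k _ => by ring
  set T := (Finset.range (M+1)).filter (fun k => ¬ p ≤ U k) with hT
  have hsplit : ∑ k ∈ Finset.range (M+1), (if p ≤ U k then f k else 0)
      = 1 - ∑ k ∈ T, f k := by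
    have := Finset.sum_filter_add_sum_filter_not (Finset.range (M+1)) (fun k => p ≤ U k) f
    rw [← Finset.sum_filter]
    rw [hT]
    linarith [hsum1 ▸ this]
  rw [hsplit]
  have hTle : ∑ k ∈ T, f k ≤ β / 2 := by
    rcases T.eq_empty_or_nonempty with hTe | hTne
    · rw [hTe, Finset.sum_empty]; linarith [hβ.1]
    · set k0 := T.max' hTne with hk0
      have hk0T : k0 ∈ T := T.max'_mem hTne
      have hk0mem := Finset.mem_filter.mp hk0T
      have hUk0 : U k0 < p := not_le.mp hk0mem.2
      have hk0M : k0 < M := by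
        rcases lt_or_eq_of_le (Nat.lt_succ_iff.mp (Finset.mem_range.mp hk0mem.1)) with h | h
        · exact h
        · exfalso; rw [h, hUM] at hUk0; linarith
      by_cases hex : ∃ q ∈ Set.Ioc (0 : ℝ) 1,
          ∑ ℓ ∈ Finset.range (k0 + 1), (M.choose ℓ : ℝ) * q ^ ℓ * (1 - q) ^ (M - ℓ) = β / 2
      · obtain ⟨hUmem, hUeq⟩ := (hU k0 hk0M).1 hex
        have hmono := cp_antitone M k0 hM hk0M
        have h1 : ∑ ℓ ∈ Finset.range (k0 + 1), (M.choose ℓ : ℝ) * p ^ ℓ * (1 - p) ^ (M - ℓ)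
            ≤ ∑ ℓ ∈ Finset.range (k0 + 1), (M.choose ℓ : ℝ) * (U k0) ^ ℓ * (1 - U k0) ^ (M - ℓ) :=
          hmono ⟨hUmem.1.le, hUmem.2⟩ ⟨hp0, hp1⟩ hUk0.le
        have h2 : ∑ k ∈ T, f k ≤ ∑ ℓ ∈ Finset.range (k0 + 1), f ℓ := by
          apply Finset.sum_le_sum_of_subset_of_nonneg
          · intro k hk
            exact Finset.mem_range.mpr (Nat.lt_succ_of_le (T.le_max' k hk))
          · intro i _ _; exact hfnn i
        rw [hUeq] at h1
        exact le_trans h2 h1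
      · have h1 := (hU k0 hk0M).2 hex
        rw [h1] at hUk0; linarith
  linarith
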